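/- Laplace transform of the Prabhakar kernel: for α > 0, β > 0, γ > 0, λ ∈ ℝ and every s > 0 with sᵅ > |λ|, ∫₀^∞ e^{-s t} · t^{β−1} · E^γ_{α,β}(λ tᵅ) dt = s^{αγ−β} / (sᵅ − λ)^γ, where E^γ_{α,β}(z) = ∑_{n=0}^∞ (Γ(γ+n)/Γ(γ)) zⁿ/(n! Γ(α n + β)) and all powers are real powers. -/

import Mathlib

open MeasureTheory Real

open Set Filter


lemma aux_integrableOn {c r : ℝ} (hc : 0 < c) (hr : 0 < r) :
    IntegrableOn (fun t : ℝ => t ^ (c - 1) * Real.exp (-(r * t))) (Set.Ioi 0) := by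
  have h0 : IntegrableOn (fun x : ℝ => Real.exp (-x) * x ^ (c - 1)) (Set.Ioi 0) :=
    Real.GammaIntegral_convergent hc
  have h2 : IntegrableOn (fun x : ℝ => Real.exp (-(r * x)) * (r * x) ^ (c - 1))
      (Set.Ioi 0) := by
    have := (integrableOn_Ioi_comp_mul_left_iff
      (fun x : ℝ => Real.exp (-x) * x ^ (c - 1)) 0 hr).mpr (by simpa using h0)
    simpa using this
  have h3 : IntegrableOn (fun x : ℝ => r ^ (1 - c) * (Real.exp (-(r * x)) * (r * x) ^ (c - 1)))
      (Set.Ioi 0) := h2.const_mul (r ^ (1 - c))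
  refine h3.congr_fun (fun x hx => ?_) measurableSet_Ioi
  have hx0 : (0 : ℝ) < x := hx
  dsimp only
  rw [Real.mul_rpow hr.le hx0.le]
  have hrr : r ^ (1 - c) * r ^ (c - 1) = 1 := by
    rw [← Real.rpow_add hr]; norm_num
  calc r ^ (1 - c) * (Real.exp (-(r * x)) * (r ^ (c - 1) * x ^ (c - 1)))
      = (r ^ (1 - c) * r ^ (c - 1)) * (x ^ (c - 1) * Real.exp (-(r * x))) := by ring
    _ = x ^ (c - 1) * Real.exp (-(r * x)) := by rw [hrr, one_mul]

lemma aux_summable {γ x : ℝ} (hγ : 0 < γ) (hx : |x| < 1) :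
    Summable (fun n : ℕ => Real.Gamma (γ + n) / n.factorial * x ^ n) := by
  set r : ℝ := (1 + |x|) / 2 with hr
  have hr1 : r < 1 := by rw [hr]; linarith
  have hxr : |x| < r := by rw [hr]; linarith [abs_nonneg x]
  apply summable_of_ratio_norm_eventually_le hr1
  have htend : Tendsto (fun n : ℕ => (γ + n) / (n + 1) * |x|) atTop (nhds (1 * |x|)) := by
    apply Tendsto.mul_const
    have h1 : Tendsto (fun y : ℝ => (γ + y) / (y + 1)) atTop (nhds 1) := by
      have : (fun y : ℝ => (γ + y) / (y + 1)) =ᶠ[atTop] fun y => 1 + (γ - 1) * (y + 1)⁻¹ := by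
        filter_upwards [eventually_gt_atTop (0 : ℝ)] with y hy
        field_simp
        ring
      rw [tendsto_congr' this]
      have : Tendsto (fun y : ℝ => (y + 1)⁻¹) atTop (nhds 0) :=
        (tendsto_atTop_add_const_right _ 1 tendsto_id).inv_tendsto_atTop
      simpa using tendsto_const_nhds.add (tendsto_const_nhds.mul this)
    exact h1.comp tendsto_natCast_atTop_atTop
  rw [one_mul] at htend
  filter_upwards [htend.eventually_le_const hxr] with n hn
  have hγn : (0 : ℝ) < γ + n := by positivity
  have hfact : (0 : ℝ) < (n.factorial : ℝ) := by positivity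
  have hG : (0 : ℝ) < Real.Gamma (γ + n) := Real.Gamma_pos_of_pos hγn
  have hGsucc : Real.Gamma (γ + (n + 1 : ℕ)) = (γ + n) * Real.Gamma (γ + n) := by
    push_cast
    rw [show γ + ((n : ℝ) + 1) = (γ + n) + 1 by ring, Real.Gamma_add_one hγn.ne']
  have hnorm : ∀ m : ℕ, ‖Real.Gamma (γ + m) / m.factorial * x ^ m‖
      = Real.Gamma (γ + m) / m.factorial * |x| ^ m := by
    intro m
    have : (0 : ℝ) < Real.Gamma (γ + m) := Real.Gamma_pos_of_pos (by positivity)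
    rw [Real.norm_eq_abs, abs_mul, abs_div, abs_pow,
      abs_of_pos this, abs_of_pos (by positivity : (0:ℝ) < (m.factorial : ℝ))]
  rw [hnorm, hnorm, hGsucc]
  calc (γ + ↑n) * Real.Gamma (γ + ↑n) / ↑(n + 1).factorial * |x| ^ (n + 1)
      = ((γ + n) / (n + 1) * |x|) * (Real.Gamma (γ + n) / n.factorial * |x| ^ n) := by
        rw [Nat.factorial_succ]
        push_cast
        rw [pow_succ]
        simp only [div_eq_mul_inv, mul_inv]
        ring
    _ ≤ r * (Real.Gamma (γ + n) / n.factorial * |x| ^ n) := by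
        apply mul_le_mul_of_nonneg_right hn
        positivity

lemma aux_binomial {γ x : ℝ} (hγ : 0 < γ) (hx : |x| < 1) :
    ∑' n : ℕ, Real.Gamma (γ + n) / n.factorial * x ^ n
      = (1 - x) ^ (-γ) * Real.Gamma γ := by
  obtain ⟨hx1, hx2⟩ := abs_lt.mp hx
  have h1x : (0 : ℝ) < 1 - x := by linarith
  set f : ℕ → ℝ → ℝ :=
    fun n t => x ^ n / n.factorial * (t ^ (γ + n - 1) * Real.exp (-(1 * t))) with hf
  have hmeas : ∀ n, AEStronglyMeasurable (f n) (volume.restrict (Set.Ioi 0)) := by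
    intro n
    refine ContinuousOn.aestronglyMeasurable ?_ measurableSet_Ioi
    refine continuousOn_const.mul (ContinuousOn.mul ?_ ?_)
    · exact continuousOn_id.rpow_const fun t ht => Or.inl (ne_of_gt ht)
    · exact ((Real.continuous_exp.comp (continuous_const.mul continuous_id).neg).continuousOn)
  have hint : ∀ n : ℕ, IntegrableOn (f n) (Set.Ioi 0) := fun n =>
    (aux_integrableOn (by positivity : (0:ℝ) < γ + n) one_pos).const_mul _
  have hval : ∀ n : ℕ, ∫ t in Set.Ioi (0:ℝ), t ^ (γ + n - 1) * Real.exp (-(1 * t))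
      = Real.Gamma (γ + n) := by
    intro n
    rw [integral_rpow_mul_exp_neg_mul_Ioi (by positivity : (0:ℝ) < γ + n) one_pos]
    norm_num
  have hintval : ∀ n : ℕ, ∫ t in Set.Ioi (0:ℝ), f n t
      = x ^ n / n.factorial * Real.Gamma (γ + n) := by
    intro n
    rw [hf]
    rw [MeasureTheory.integral_const_mul, hval n]
  have hnormval : ∀ n : ℕ, ∫ t in Set.Ioi (0:ℝ), ‖f n t‖
      = |x| ^ n / n.factorial * Real.Gamma (γ + n) := by
    intro n
    have : ∀ t ∈ Set.Ioi (0:ℝ), ‖f n t‖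
        = |x| ^ n / n.factorial * (t ^ (γ + n - 1) * Real.exp (-(1 * t))) := by
      intro t ht
      have ht0 : (0:ℝ) < t := ht
      rw [hf]
      simp only [Real.norm_eq_abs, abs_mul, abs_div, abs_pow,
        abs_of_pos (Real.rpow_pos_of_pos ht0 _), abs_of_pos (Real.exp_pos _),
        abs_of_pos (by positivity : (0:ℝ) < (n.factorial : ℝ))]
    rw [setIntegral_congr_fun measurableSet_Ioi this,
      MeasureTheory.integral_const_mul, hval n]
  have hsum : Summable (fun n : ℕ => |x| ^ n / n.factorial * Real.Gamma (γ + n)) := by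
    refine (aux_summable hγ (by rwa [abs_abs])).congr fun n => ?_
    ring
  have hne : ∑' n : ℕ, ∫⁻ t in Set.Ioi (0:ℝ), ‖f n t‖₊ ≠ ⊤ := by
    have h1 : ∀ n : ℕ, ∫⁻ t in Set.Ioi (0:ℝ), ‖f n t‖₊
        = ENNReal.ofReal (|x| ^ n / n.factorial * Real.Gamma (γ + n)) := by
      intro n
      simp only [← enorm_eq_nnnorm]
      rw [← MeasureTheory.ofReal_integral_norm_eq_lintegral_enorm (hint n), hnormval n]
    rw [tsum_congr h1, ← ENNReal.ofReal_tsum_of_nonneg (fun n => by positivity) hsum]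
    exact ENNReal.ofReal_ne_top
  have hswap := MeasureTheory.integral_tsum hmeas hne
  have heq : ∀ t ∈ Set.Ioi (0:ℝ),
      (∑' n : ℕ, f n t) = t ^ (γ - 1) * Real.exp (-((1 - x) * t)) := by
    intro t ht
    have ht0 : (0:ℝ) < t := ht
    have h2 : ∀ n : ℕ, f n t = t ^ (γ - 1) * Real.exp (-t) * ((x * t) ^ n / n.factorial) := by
      intro n
      show x ^ n / (n.factorial : ℝ) * (t ^ (γ + (n:ℝ) - 1) * Real.exp (-(1 * t)))
        = t ^ (γ - 1) * Real.exp (-t) * ((x * t) ^ n / (n.factorial : ℝ))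
      have : t ^ (γ + (n:ℝ) - 1) = t ^ (γ - 1) * t ^ n := by
        rw [show γ + (n:ℝ) - 1 = (γ - 1) + n by ring, Real.rpow_add ht0,
          Real.rpow_natCast]
      rw [this, mul_pow, one_mul]
      ring
    rw [tsum_congr h2, tsum_mul_left]
    have : ∑' n : ℕ, (x * t) ^ n / (n.factorial : ℝ) = Real.exp (x * t) := by
      rw [Real.exp_eq_exp_ℝ, NormedSpace.exp_eq_tsum_div]
    rw [this, mul_assoc, ← Real.exp_add]
    ring_nf
  calc ∑' n : ℕ, Real.Gamma (γ + n) / n.factorial * x ^ n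
      = ∑' n : ℕ, ∫ t in Set.Ioi (0:ℝ), f n t := by
        refine tsum_congr fun n => ?_
        rw [hintval n]; ring
    _ = ∫ t in Set.Ioi (0:ℝ), ∑' n : ℕ, f n t := hswap.symm
    _ = ∫ t in Set.Ioi (0:ℝ), t ^ (γ - 1) * Real.exp (-((1 - x) * t)) :=
        setIntegral_congr_fun measurableSet_Ioi heq
    _ = (1 / (1 - x)) ^ γ * Real.Gamma γ := integral_rpow_mul_exp_neg_mul_Ioi hγ h1x
    _ = (1 - x) ^ (-γ) * Real.Gamma γ := by
        rw [one_div, Real.inv_rpow h1x.le, ← Real.rpow_neg h1x.le]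

/-- Laplace transform of the Prabhakar kernel: for `α, β, γ > 0`, `λ ∈ ℝ` and `s > 0`
with `sᵅ > |λ|`,
`∫₀^∞ e^{-st} t^{β-1} E^γ_{α,β}(λ tᵅ) dt = s^{αγ-β} / (sᵅ - λ)^γ`. -/
theorem laplace_prabhakar
    (α β γ l : ℝ) (hα : 0 < α) (hβ : 0 < β) (hγ : 0 < γ) :
    ∀ s > (0 : ℝ), s ^ α > |l| →
      ∫ t in Set.Ioi (0 : ℝ),
          Real.exp (-s * t) * t ^ (β - 1) *
            ∑' n : ℕ,
              Real.Gamma (γ + n) / Real.Gamma γ * (l * t ^ α) ^ n /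
                (n.factorial * Real.Gamma (α * n + β))
        = s ^ (α * γ - β) / (s ^ α - l) ^ γ := by
  intro s hs hsl
  have hsα : (0 : ℝ) < s ^ α := Real.rpow_pos_of_pos hs α
  set y : ℝ := l / s ^ α with hy
  have hyabs : |y| < 1 := by
    rw [hy, abs_div, abs_of_pos hsα, div_lt_one hsα]
    exact hsl
  have hΓγ : (0 : ℝ) < Real.Gamma γ := Real.Gamma_pos_of_pos hγ
  set K : ℕ → ℝ := fun n =>
    Real.Gamma (γ + n) * l ^ n /
      (Real.Gamma γ * n.factorial * Real.Gamma (α * n + β)) with hK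
  set f : ℕ → ℝ → ℝ :=
    fun n t => K n * (t ^ (α * n + β - 1) * Real.exp (-(s * t))) with hf
  have hcn : ∀ n : ℕ, (0 : ℝ) < α * n + β := fun n => by positivity
  have hmeas : ∀ n, AEStronglyMeasurable (f n) (volume.restrict (Set.Ioi 0)) := by
    intro n
    refine ContinuousOn.aestronglyMeasurable ?_ measurableSet_Ioi
    refine continuousOn_const.mul (ContinuousOn.mul ?_ ?_)
    · exact continuousOn_id.rpow_const fun t ht => Or.inl (ne_of_gt ht)
    · exact ((Real.continuous_exp.comp (continuous_const.mul continuous_id).neg).continuousOn)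
  have hint : ∀ n : ℕ, IntegrableOn (f n) (Set.Ioi 0) := fun n =>
    (aux_integrableOn (hcn n) hs).const_mul _
  have hval : ∀ n : ℕ, ∫ t in Set.Ioi (0:ℝ), t ^ (α * n + β - 1) * Real.exp (-(s * t))
      = (1 / s) ^ (α * n + β) * Real.Gamma (α * n + β) := fun n =>
    integral_rpow_mul_exp_neg_mul_Ioi (hcn n) hs
  have hsan : ∀ n : ℕ, s ^ (α * (n:ℝ)) = (s ^ α) ^ n := by
    intro n
    rw [Real.rpow_mul hs.le, Real.rpow_natCast]
  have hGn2 : ∀ n : ℕ, (0:ℝ) < Real.Gamma (α * n + β) := fun n =>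
    Real.Gamma_pos_of_pos (hcn n)
  have hpow : ∀ n : ℕ, (1 / s) ^ (α * (n:ℝ) + β) = ((s ^ α) ^ n * s ^ β)⁻¹ := by
    intro n
    rw [one_div, ← Real.rpow_neg_one s, ← Real.rpow_mul hs.le, neg_one_mul,
      Real.rpow_neg hs.le, Real.rpow_add hs, hsan n]
  have hintval : ∀ n : ℕ, ∫ t in Set.Ioi (0:ℝ), f n t
      = Real.Gamma (γ + n) / n.factorial * y ^ n * (s ^ (-β) / Real.Gamma γ) := by
    intro n
    rw [hf]
    rw [MeasureTheory.integral_const_mul, hval n, hK, hpow n]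
    rw [hy, div_pow, Real.rpow_neg hs.le]
    have h1 : ((s ^ α) ^ n : ℝ) ≠ 0 := by positivity
    have h2 : (s ^ β : ℝ) ≠ 0 := by positivity
    have h3 : (Real.Gamma (α * n + β)) ≠ 0 := (hGn2 n).ne'
    have h4 : (Real.Gamma γ) ≠ 0 := hΓγ.ne'
    have h5 : ((n.factorial : ℝ)) ≠ 0 := by positivity
    field_simp
  have hnormval : ∀ n : ℕ, ∫ t in Set.Ioi (0:ℝ), ‖f n t‖
      = Real.Gamma (γ + n) / n.factorial * |y| ^ n * (s ^ (-β) / Real.Gamma γ) := by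
    intro n
    have habsK : |K n| = Real.Gamma (γ + n) * |l| ^ n /
        (Real.Gamma γ * n.factorial * Real.Gamma (α * n + β)) := by
      rw [hK, abs_div, abs_mul, abs_pow,
        abs_of_pos (Real.Gamma_pos_of_pos (by positivity : (0:ℝ) < γ + n)),
        abs_of_pos (by positivity : (0:ℝ) < Real.Gamma γ * n.factorial * Real.Gamma (α * n + β))]
    have heqn : ∀ t ∈ Set.Ioi (0:ℝ), ‖f n t‖
        = |K n| * (t ^ (α * n + β - 1) * Real.exp (-(s * t))) := by
      intro t ht
      have ht0 : (0:ℝ) < t := ht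
      rw [hf]
      simp only [Real.norm_eq_abs, abs_mul, abs_of_pos (Real.rpow_pos_of_pos ht0 _),
        abs_of_pos (Real.exp_pos _)]
    rw [setIntegral_congr_fun measurableSet_Ioi heqn, MeasureTheory.integral_const_mul,
      hval n, habsK, hpow n]
    have hya : |y| = |l| / s ^ α := by rw [hy, abs_div, abs_of_pos hsα]
    rw [hya, div_pow, Real.rpow_neg hs.le]
    have h1 : ((s ^ α) ^ n : ℝ) ≠ 0 := by positivity
    have h2 : (s ^ β : ℝ) ≠ 0 := by positivity
    have h3 : (Real.Gamma (α * n + β)) ≠ 0 := (hGn2 n).ne'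
    have h4 : (Real.Gamma γ) ≠ 0 := hΓγ.ne'
    have h5 : ((n.factorial : ℝ)) ≠ 0 := by positivity
    field_simp
  have hsum : Summable (fun n : ℕ =>
      Real.Gamma (γ + n) / n.factorial * |y| ^ n * (s ^ (-β) / Real.Gamma γ)) :=
    (aux_summable hγ (by rwa [abs_abs])).mul_right _
  have hne : ∑' n : ℕ, ∫⁻ t in Set.Ioi (0:ℝ), ‖f n t‖₊ ≠ ⊤ := by
    have h1 : ∀ n : ℕ, ∫⁻ t in Set.Ioi (0:ℝ), ‖f n t‖₊
        = ENNReal.ofReal (Real.Gamma (γ + n) / n.factorial * |y| ^ n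
            * (s ^ (-β) / Real.Gamma γ)) := by
      intro n
      simp only [← enorm_eq_nnnorm]
      rw [← MeasureTheory.ofReal_integral_norm_eq_lintegral_enorm (hint n), hnormval n]
    rw [tsum_congr h1, ← ENNReal.ofReal_tsum_of_nonneg (fun n => by positivity) hsum]
    exact ENNReal.ofReal_ne_top
  have hswap := MeasureTheory.integral_tsum hmeas hne
  have heq : ∀ t ∈ Set.Ioi (0:ℝ),
      Real.exp (-s * t) * t ^ (β - 1) *
          ∑' n : ℕ, Real.Gamma (γ + n) / Real.Gamma γ * (l * t ^ α) ^ n /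
            (n.factorial * Real.Gamma (α * n + β))
        = ∑' n : ℕ, f n t := by
    intro t ht
    have ht0 : (0:ℝ) < t := ht
    rw [← tsum_mul_left]
    refine tsum_congr fun n => ?_
    simp only [hf, hK]
    have h1 : (l * t ^ α) ^ n = l ^ n * t ^ (α * (n:ℝ)) := by
      rw [mul_pow, ← Real.rpow_natCast (t ^ α) n, ← Real.rpow_mul ht0.le]
    have h2 : t ^ (α * (n:ℝ) + β - 1) = t ^ (β - 1) * t ^ (α * (n:ℝ)) := by
      rw [show α * (n:ℝ) + β - 1 = (β - 1) + α * n by ring, Real.rpow_add ht0]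
    rw [h1, h2, neg_mul]
    ring
  rw [setIntegral_congr_fun measurableSet_Ioi heq, hswap, tsum_congr hintval,
    tsum_mul_right, aux_binomial hγ hyabs]
  -- final algebra
  have hA : (0:ℝ) < s ^ α - l := by
    have : l ≤ |l| := le_abs_self l
    linarith
  have h1y : 1 - y = (s ^ α - l) / s ^ α := by
    rw [hy]
    field_simp
  rw [h1y, Real.div_rpow hA.le hsα.le, ← Real.rpow_mul hs.le,
    Real.rpow_neg hA.le, show α * (-γ) = -(α * γ) by ring, Real.rpow_neg hs.le,
    Real.rpow_neg hs.le β, Real.rpow_sub hs]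
  have h6 : (s ^ (α * γ) : ℝ) ≠ 0 := by positivity
  have h7 : ((s ^ α - l) ^ γ : ℝ) ≠ 0 := by positivity
  have h8 : (s ^ β : ℝ) ≠ 0 := by positivity
  field_simp
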